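/- arXiv:2502.09377 — 4 statements merged into one kernel-verified Lean document; each statement's English description precedes it below -/
import Mathlib

section
/- Let M be a finite set of goods, let v : 2^M → ℝ≥0 be an additive valuation, let n ≥ 2 be an integer, and let g_1, g_2 ∈ M be two distinct goods with v({g_1}) + v({g_2}) ≤ μ^n(M). Then μ^n(M) ≤ μ^{n−1}(M \ {g_1, g_2}), where μ^d(S) denotes the maximum over all partitions of S into d bundles of the minimum value of a bundle under v. -/
open Finset

/-- The `d`-maximin share of valuation `v` over the set `S` of goods:
the maximum over partitions of `S` into `d` bundles of the minimum bundle value. -/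
noncomputable def mms {G : Type*} (v : Finset G → ℝ) (d : ℕ) (S : Finset G) : ℝ :=
  ⨆ P : G → Fin d, ⨅ j : Fin d, v (S.filter fun g => P g = j)

/-- For an additive valuation (weights `w`), `n ≥ 2`, and two distinct goods
`g₁, g₂` with `w g₁ + w g₂ ≤ μ^n(M)`, removing `g₁, g₂` and one agent does not decrease the
maximin share: `μ^n(M) ≤ μ^{n−1}(M \ {g₁, g₂})`. -/
theorem stmt13 {G : Type*} [Fintype G] [DecidableEq G]
    (w : G → ℝ) (hw : ∀ g, 0 ≤ w g) (n : ℕ) (hn : 2 ≤ n)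
    (g₁ g₂ : G) (hne : g₁ ≠ g₂)
    (hval : w g₁ + w g₂ ≤ mms (fun S => ∑ g ∈ S, w g) n Finset.univ) :
    mms (fun S => ∑ g ∈ S, w g) n Finset.univ ≤
      mms (fun S => ∑ g ∈ S, w g) (n - 1) (Finset.univ \ {g₁, g₂}) := by
  classical
  obtain ⟨m, hm⟩ : ∃ m, n = m + 1 := ⟨n - 1, by omega⟩
  have hm1 : 1 ≤ m := by omega
  have hmn : n - 1 = m := by omega
  rw [hmn]
  haveI : NeZero m := ⟨by omega⟩
  haveI : NeZero n := ⟨by omega⟩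
  set v : Finset G → ℝ := fun S => ∑ g ∈ S, w g with hv
  have hnonneg : ∀ (T : Finset G), 0 ≤ v T := fun T => Finset.sum_nonneg fun g _ => hw g
  have hbB : ∀ (d : ℕ) (T : Finset G) (P : G → Fin d),
      BddBelow (Set.range fun j : Fin d => v (T.filter fun g => P g = j)) := by
    intro d T P
    exact ⟨0, by rintro x ⟨j, rfl⟩; exact hnonneg _⟩
  have hbA : ∀ (d : ℕ) [NeZero d] (T : Finset G),
      BddAbove (Set.range fun P : G → Fin d => ⨅ j : Fin d, v (T.filter fun g => P g = j)) := by
    intro d _ T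
    refine ⟨∑ g, w g, ?_⟩
    rintro x ⟨P, rfl⟩
    refine le_trans (ciInf_le (hbB d T P) ⟨0, Nat.pos_of_ne_zero (NeZero.ne d)⟩) ?_
    exact Finset.sum_le_sum_of_subset_of_nonneg (fun x _ => mem_univ x) (fun g _ _ => hw g)
  set μ := mms v n Finset.univ with hμ
  apply le_of_forall_pos_le_add
  intro ε hε
  have hlt : μ - ε/2 < ⨆ P : G → Fin n, ⨅ j : Fin n, v (Finset.univ.filter fun g => P g = j) := by
    have : μ = ⨆ P : G → Fin n, ⨅ j : Fin n, v (Finset.univ.filter fun g => P g = j) := by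
      rw [hμ, mms]
    rw [← this]; linarith
  obtain ⟨P, hP⟩ := exists_lt_of_lt_ciSup hlt
  set c := ⨅ j : Fin n, v (Finset.univ.filter fun g => P g = j) with hc
  have hcB : ∀ j : Fin n, c ≤ v (Finset.univ.filter fun g => P g = j) :=
    fun j => ciInf_le (hbB n Finset.univ P) j
  set i1 := P g₁ with hi1
  set i2 := P g₂ with hi2
  have hi2lt : (i2 : ℕ) < m + 1 := by have := i2.isLt; omega
  set κ : Fin n → Fin m := fun i =>
    if h : (i : ℕ) < (i2 : ℕ) then ⟨i, by omega⟩
    else ⟨(i : ℕ) - 1, by have := i.isLt; omega⟩ with hκ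
  set ι : Fin m → Fin n := fun j =>
    if h : (j : ℕ) < (i2 : ℕ) then ⟨j, by have := j.isLt; omega⟩
    else ⟨(j : ℕ) + 1, by have := j.isLt; omega⟩ with hι
  have hκval : ∀ i : Fin n, (κ i : ℕ) = if (i : ℕ) < (i2 : ℕ) then (i : ℕ) else (i : ℕ) - 1 := by
    intro i; simp only [hκ]; split_ifs <;> rfl
  have hιval : ∀ j : Fin m, (ι j : ℕ) = if (j : ℕ) < (i2 : ℕ) then (j : ℕ) else (j : ℕ) + 1 := by
    intro j; simp only [hι]; split_ifs <;> rfl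
  have hιne : ∀ j : Fin m, ι j ≠ i2 := by
    intro j h
    have := congrArg Fin.val h
    rw [hιval] at this
    split_ifs at this <;> omega
  have hκι : ∀ j : Fin m, κ (ι j) = j := by
    intro j
    apply Fin.ext
    rw [hκval, hιval]
    have := j.isLt
    split_ifs <;> omega
  set Q : G → Fin m := fun g => if P g = i2 then κ i1 else κ (P g) with hQ
  have key : ∀ j : Fin m, μ - ε ≤ v ((Finset.univ \ {g₁, g₂}).filter fun g => Q g = j) := by
    intro j
    by_cases hii : ι j = i1
    · -- merged case: i1 ≠ i2, bundle j contains (B_{i1} \ {g₁}) ∪ (B_{i2} \ {g₂})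
      have h12 : i1 ≠ i2 := by rw [← hii]; exact hιne j
      have hg1mem : g₁ ∈ Finset.univ.filter fun g => P g = i1 := by
        simp [Finset.mem_filter, hi1]
      have hg2mem : g₂ ∈ Finset.univ.filter fun g => P g = i2 := by
        simp [Finset.mem_filter, hi2]
      have hdisj : Disjoint ((Finset.univ.filter fun g => P g = i1).erase g₁)
          ((Finset.univ.filter fun g => P g = i2).erase g₂) := by
        apply Finset.disjoint_left.2
        intro a ha hb
        rw [Finset.mem_erase, Finset.mem_filter] at ha hb
        exact h12 (ha.2.2 ▸ hb.2.2 ▸ rfl)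
      have hsub : ((Finset.univ.filter fun g => P g = i1).erase g₁ ∪
            (Finset.univ.filter fun g => P g = i2).erase g₂) ⊆
          (Finset.univ \ {g₁, g₂}).filter fun g => Q g = j := by
        intro g hg
        rw [Finset.mem_filter, Finset.mem_sdiff, Finset.mem_insert, Finset.mem_singleton]
        rcases Finset.mem_union.1 hg with h | h <;>
          rw [Finset.mem_erase, Finset.mem_filter] at h
        · have hgg2 : g ≠ g₂ := by
            intro he; exact h12 (by rw [← h.2.2, he, ← hi2])
          refine ⟨⟨mem_univ g, by push_neg; exact ⟨h.1, hgg2⟩⟩, ?_⟩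
          rw [hQ]
          simp only
          rw [if_neg (by rw [h.2.2]; exact h12), h.2.2, ← hii, hκι]
        · have hgg1 : g ≠ g₁ := by
            intro he; exact h12 (by rw [hi1, ← he]; exact h.2.2)
          refine ⟨⟨mem_univ g, by push_neg; exact ⟨hgg1, h.1⟩⟩, ?_⟩
          rw [hQ]
          simp only
          rw [if_pos h.2.2, ← hii, hκι]
      have hval1 : v ((Finset.univ.filter fun g => P g = i1).erase g₁) =
          v (Finset.univ.filter fun g => P g = i1) - w g₁ :=
        Finset.sum_erase_eq_sub hg1mem
      have hval2 : v ((Finset.univ.filter fun g => P g = i2).erase g₂) =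
          v (Finset.univ.filter fun g => P g = i2) - w g₂ :=
        Finset.sum_erase_eq_sub hg2mem
      have hunion : v ((Finset.univ.filter fun g => P g = i1).erase g₁ ∪
            (Finset.univ.filter fun g => P g = i2).erase g₂) =
          v ((Finset.univ.filter fun g => P g = i1).erase g₁) +
          v ((Finset.univ.filter fun g => P g = i2).erase g₂) := by
        rw [hv]; exact Finset.sum_union hdisj
      have hmono : v ((Finset.univ.filter fun g => P g = i1).erase g₁ ∪
            (Finset.univ.filter fun g => P g = i2).erase g₂) ≤
          v ((Finset.univ \ {g₁, g₂}).filter fun g => Q g = j) :=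
        Finset.sum_le_sum_of_subset_of_nonneg hsub (fun g _ _ => hw g)
      have h1 := hcB i1
      have h2 := hcB i2
      have hμval : w g₁ + w g₂ ≤ μ := hval
      linarith
    · -- easy case: bundle j contains B_{ι j} entirely
      have hsub : (Finset.univ.filter fun g => P g = ι j) ⊆
          (Finset.univ \ {g₁, g₂}).filter fun g => Q g = j := by
        intro g hg
        rw [Finset.mem_filter] at hg
        rw [Finset.mem_filter, Finset.mem_sdiff, Finset.mem_insert, Finset.mem_singleton]
        have hgg1 : g ≠ g₁ := by intro he; exact hii (by rw [hi1, ← he]; exact hg.2.symm)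
        have hgg2 : g ≠ g₂ := by intro he; exact hιne j (by rw [hi2, ← he]; exact hg.2.symm)
        refine ⟨⟨mem_univ g, by push_neg; exact ⟨hgg1, hgg2⟩⟩, ?_⟩
        rw [hQ]
        simp only
        rw [if_neg (by rw [hg.2]; exact hιne j), hg.2, hκι]
      have hmono : v (Finset.univ.filter fun g => P g = ι j) ≤
          v ((Finset.univ \ {g₁, g₂}).filter fun g => Q g = j) :=
        Finset.sum_le_sum_of_subset_of_nonneg hsub (fun g _ _ => hw g)
      have h1 := hcB (ι j)
      linarith
  have hinf : μ - ε ≤ ⨅ j : Fin m, v ((Finset.univ \ {g₁, g₂}).filter fun g => Q g = j) :=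
    le_ciInf key
  have hR : (⨅ j : Fin m, v ((Finset.univ \ {g₁, g₂}).filter fun g => Q g = j)) ≤
      mms v m (Finset.univ \ {g₁, g₂}) := by
    rw [mms]
    exact le_ciSup (hbA m (Finset.univ \ {g₁, g₂})) Q
  linarith
end

section
/- Let M be a finite set of goods, let v : 2^M → ℝ≥0 be an additive valuation, let n ≥ 3 be an integer, and let g_1, g_2, g_3 ∈ M be pairwise distinct goods such that v({g_2}) + v({g_3}) ≤ μ^n(M). Then μ^{n−2}(M \ {g_1, g_2, g_3}) ≥ μ^n(M), where μ^d(S) denotes the maximum over all partitions of S into d bundles of the minimum value of a bundle under v. -/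
open Finset

/-- For an additive valuation (weights `w`), `n ≥ 3`, and pairwise distinct
goods `g₁, g₂, g₃` with `w g₂ + w g₃ ≤ μ^n(M)`, removing them and two agents does not
decrease the maximin share: `μ^{n−2}(M \ {g₁, g₂, g₃}) ≥ μ^n(M)`. -/
theorem stmt14 {G : Type*} [Fintype G] [DecidableEq G]
    (w : G → ℝ) (hw : ∀ g, 0 ≤ w g) (n : ℕ) (hn : 3 ≤ n)
    (g₁ g₂ g₃ : G) (h12 : g₁ ≠ g₂) (h13 : g₁ ≠ g₃) (h23 : g₂ ≠ g₃)
    (hval : w g₂ + w g₃ ≤ mms (fun S => ∑ g ∈ S, w g) n Finset.univ) :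
    mms (fun S => ∑ g ∈ S, w g) n Finset.univ ≤
      mms (fun S => ∑ g ∈ S, w g) (n - 2) (Finset.univ \ {g₁, g₂, g₃}) := by
  classical
  set v : Finset G → ℝ := fun S => ∑ g ∈ S, w g with hvdef
  set μ : ℝ := mms v n Finset.univ with hμ
  haveI hne : Nonempty (Fin n) := ⟨⟨0, by omega⟩⟩
  haveI hne2 : Nonempty (Fin (n - 2)) := ⟨⟨0, by omega⟩⟩
  obtain ⟨P₀, hP₀⟩ := Finite.exists_max
    (fun P : G → Fin n => ⨅ j : Fin n, v (Finset.univ.filter fun g => P g = j))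
  have hsup : μ ≤ ⨅ j : Fin n, v (Finset.univ.filter fun g => P₀ g = j) := ciSup_le hP₀
  have hbundle : ∀ j : Fin n, μ ≤ v (Finset.univ.filter fun g => P₀ g = j) := fun j =>
    hsup.trans (ciInf_le (Set.finite_range _).bddBelow j)
  -- choose a 3-element superset T of the bundles of the three goods
  have h3 : ({P₀ g₁, P₀ g₂, P₀ g₃} : Finset (Fin n)).card ≤ 3 := by
    refine le_trans (Finset.card_insert_le _ _) ?_
    refine Nat.succ_le_succ (le_trans (Finset.card_insert_le _ _) ?_)
    simp
  obtain ⟨T, hT, hTcard⟩ := Finset.exists_superset_card_eq h3 (by simp; omega)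
  have hcompl : (Tᶜ : Finset (Fin n)).card = n - 3 := by
    simp [Finset.card_compl, hTcard]
  let e : (Tᶜ : Finset (Fin n)) ≃ Fin (n - 3) := Tᶜ.equivFinOfCardEq hcompl
  have h32 : n - 3 + 1 = n - 2 := by omega
  set f : Fin n → Fin (n - 2) := fun j =>
    if h : j ∈ T then ⟨0, by omega⟩
    else Fin.cast h32 (e ⟨j, Finset.mem_compl.mpr h⟩).succ with hfdef
  have hfT : ∀ j ∈ T, (f j).val = 0 := by
    intro j hj; simp [hfdef, hj]
  have hfnT : ∀ j, (h : j ∉ T) → (f j).val = (e ⟨j, Finset.mem_compl.mpr h⟩).val + 1 := by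
    intro j hj; simp [hfdef, hj, Fin.val_succ]
  have haT : P₀ g₁ ∈ T := hT (by simp)
  have hbT : P₀ g₂ ∈ T := hT (by simp)
  have hcT : P₀ g₃ ∈ T := hT (by simp)
  -- key claim: each bundle of f ∘ P₀ (on the reduced good set) has value ≥ μ
  have key : ∀ j' : Fin (n - 2),
      μ ≤ v ((Finset.univ \ {g₁, g₂, g₃}).filter fun g => f (P₀ g) = j') := by
    intro j'
    by_cases h0 : j'.val = 0
    · -- merged bundle
      have ha : P₀ g₁ ∈ T := haT
      have hacard : (T.erase (P₀ g₁)).card = 2 := by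
        rw [Finset.card_erase_of_mem ha, hTcard]
      obtain ⟨t1, t2, ht12, hpair⟩ := Finset.card_eq_two.mp hacard
      set B : Finset G := Finset.univ.filter fun g => P₀ g ∈ T.erase (P₀ g₁) with hBdef
      have hsubset : B \ {g₂, g₃} ⊆
          (Finset.univ \ {g₁, g₂, g₃}).filter fun g => f (P₀ g) = j' := by
        intro g hg
        rw [Finset.mem_sdiff] at hg
        obtain ⟨hgB, hg23⟩ := hg
        rw [hBdef, Finset.mem_filter] at hgB
        have hgT : P₀ g ∈ T := Finset.mem_of_mem_erase hgB.2
        have hg1 : g ≠ g₁ := by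
          intro h; rw [h] at hgB; exact (Finset.notMem_erase _ _) hgB.2
        rw [Finset.mem_filter, Finset.mem_sdiff]
        refine ⟨⟨Finset.mem_univ _, ?_⟩, ?_⟩
        · simp only [Finset.mem_insert, Finset.mem_singleton] at hg23 ⊢
          push_neg at hg23 ⊢
          exact ⟨hg1, hg23⟩
        · apply Fin.ext; rw [hfT _ hgT, h0]
      have hB : B = (Finset.univ.filter fun g => P₀ g = t1) ∪
          (Finset.univ.filter fun g => P₀ g = t2) := by
        ext g
        simp only [hBdef, Finset.mem_filter, Finset.mem_union, Finset.mem_univ, true_and,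
          hpair, Finset.mem_insert, Finset.mem_singleton]
      have hdisj : Disjoint (Finset.univ.filter fun g => P₀ g = t1)
          (Finset.univ.filter fun g => P₀ g = t2) := by
        rw [Finset.disjoint_left]
        intro g hg1 hg2
        rw [Finset.mem_filter] at hg1 hg2
        exact ht12 (hg1.2 ▸ hg2.2 ▸ rfl)
      have hvB : v B = v (Finset.univ.filter fun g => P₀ g = t1) +
          v (Finset.univ.filter fun g => P₀ g = t2) := by
        rw [hvdef]; simp only; rw [hB, Finset.sum_union hdisj]
      have hB1 : v B ≤ v (B \ {g₂, g₃}) + (w g₂ + w g₃) := by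
        have hsub : B ⊆ (B \ {g₂, g₃}) ∪ {g₂, g₃} := by
          intro g hg
          rw [Finset.mem_union, Finset.mem_sdiff]
          by_cases h : g ∈ ({g₂, g₃} : Finset G)
          · exact Or.inr h
          · exact Or.inl ⟨hg, h⟩
        have h1 : v B ≤ v ((B \ {g₂, g₃}) ∪ {g₂, g₃}) := by
          rw [hvdef]
          exact Finset.sum_le_sum_of_subset_of_nonneg hsub (fun g _ _ => hw g)
        have h2 : v ((B \ {g₂, g₃}) ∪ {g₂, g₃}) ≤ v (B \ {g₂, g₃}) + v {g₂, g₃} := by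
          rw [hvdef]
          have := Finset.sum_union_inter (s₁ := B \ {g₂, g₃}) (s₂ := ({g₂, g₃} : Finset G)) (f := w)
          have hnn : 0 ≤ ∑ g ∈ (B \ {g₂, g₃}) ∩ {g₂, g₃}, w g :=
            Finset.sum_nonneg (fun g _ => hw g)
          simp only at this ⊢
          linarith
        have h3' : v ({g₂, g₃} : Finset G) = w g₂ + w g₃ := by
          rw [hvdef]; simp [Finset.sum_pair h23]
        linarith
      have hmono : v (B \ {g₂, g₃}) ≤
          v ((Finset.univ \ {g₁, g₂, g₃}).filter fun g => f (P₀ g) = j') := by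
        rw [hvdef]
        exact Finset.sum_le_sum_of_subset_of_nonneg hsubset (fun g _ _ => hw g)
      have hb1 := hbundle t1
      have hb2 := hbundle t2
      have hval' : w g₂ + w g₃ ≤ μ := hval
      linarith
    · -- singleton bundle
      have hlt : j'.val < n - 2 := j'.isLt
      set i : Fin (n - 3) := ⟨j'.val - 1, by omega⟩ with hidef
      set j₀ : Fin n := ((e.symm i : (Tᶜ : Finset (Fin n))) : Fin n) with hj₀def
      have hj₀ : j₀ ∉ T := Finset.mem_compl.mp (e.symm i).2
      have hset : ((Finset.univ \ {g₁, g₂, g₃}).filter fun g => f (P₀ g) = j') =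
          Finset.univ.filter fun g => P₀ g = j₀ := by
        ext g
        simp only [Finset.mem_filter, Finset.mem_sdiff, Finset.mem_univ, true_and]
        constructor
        · rintro ⟨-, hf⟩
          by_cases hgT : P₀ g ∈ T
          · exact absurd (hf ▸ hfT _ hgT) (by omega)
          · have := hfnT _ hgT
            rw [hf] at this
            have hei : e ⟨P₀ g, Finset.mem_compl.mpr hgT⟩ = i := by
              apply Fin.ext; rw [hidef]; simp; omega
            have : (⟨P₀ g, Finset.mem_compl.mpr hgT⟩ : (Tᶜ : Finset (Fin n))) = e.symm i := by
              rw [← hei, Equiv.symm_apply_apply]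
            rw [hj₀def, ← this]
        · intro hg
          have hgT : P₀ g ∉ T := hg ▸ hj₀
          have hval0 := hfnT _ hgT
          have hei : (⟨P₀ g, Finset.mem_compl.mpr hgT⟩ : (Tᶜ : Finset (Fin n))) = e.symm i := by
            apply Subtype.ext; simpa [hj₀def] using hg
          have heival : (e ⟨P₀ g, Finset.mem_compl.mpr hgT⟩).val = j'.val - 1 := by
            rw [hei, Equiv.apply_symm_apply, hidef]
          refine ⟨?_, ?_⟩
          · simp only [Finset.mem_insert, Finset.mem_singleton]
            push_neg
            refine ⟨fun h => hgT (h ▸ haT), fun h => hgT (h ▸ hbT), fun h => hgT (h ▸ hcT)⟩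
          · apply Fin.ext; rw [hval0, heival]; omega
      rw [hset]
      exact hbundle j₀
  -- conclude
  have hQ : μ ≤ ⨅ j' : Fin (n - 2),
      v ((Finset.univ \ {g₁, g₂, g₃}).filter fun g => (fun g => f (P₀ g)) g = j') :=
    le_ciInf key
  refine hQ.trans ?_
  rw [mms]
  exact le_ciSup (f := fun P : G → Fin (n - 2) =>
      ⨅ j : Fin (n - 2), v ((Finset.univ \ {g₁, g₂, g₃}).filter fun g => P g = j))
    (Set.finite_range _).bddAbove (fun g => f (P₀ g))
end

section
/- Let M be a finite set of goods, let v : 2^M → ℝ≥0 be an additive valuation, let n ≥ 4 be an integer, and let S = {h_1, h_2, s_1, s_2, s_3} ⊆ M be a set of five pairwise distinct goods such that v({h_j}) ≤ (4/5)·μ^n(M) for j ∈ {1,2} and v({s_j}) ≤ (2/5)·μ^n(M) for j ∈ {1,2,3}. Then μ^{n−3}(M \ S) ≥ μ^n(M), where μ^d(T) denotes the maximum over all partitions of T into d bundles of the minimum value of a bundle under v. -/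
open Finset

section Aux
variable {G : Type*} [Fintype G] [DecidableEq G]

lemma exists_opt (v : Finset G → ℝ) (d : ℕ) (hd : 0 < d) (T : Finset G) :
    ∃ P : G → Fin d, ∀ j : Fin d, mms v d T ≤ v (T.filter fun g => P g = j) := by
  have : Nonempty (Fin d) := ⟨⟨0, hd⟩⟩
  obtain ⟨P, hP⟩ := Finite.exists_max
    (fun P : G → Fin d => ⨅ j : Fin d, v (T.filter fun g => P g = j))
  refine ⟨P, fun j => ?_⟩
  have h1 : mms v d T ≤ ⨅ j : Fin d, v (T.filter fun g => P g = j) := ciSup_le hP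
  exact h1.trans (ciInf_le (Set.Finite.bddBelow (Set.finite_range _)) j)

lemma le_mms (v : Finset G → ℝ) (d : ℕ) (hd : 0 < d) (T : Finset G) (μ : ℝ)
    (Q : G → Fin d) (h : ∀ j, μ ≤ v (T.filter fun g => Q g = j)) : μ ≤ mms v d T := by
  have : Nonempty (Fin d) := ⟨⟨0, hd⟩⟩
  have h1 : μ ≤ ⨅ j : Fin d, v (T.filter fun g => Q g = j) := le_ciInf h
  unfold mms
  exact h1.trans (le_ciSup (f := fun P : G → Fin d => ⨅ j : Fin d, v (T.filter fun g => P g = j))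
    (Set.Finite.bddAbove (Set.finite_range _)) Q)

lemma five_distinct {α : Type*} [DecidableEq α] {a b c d e : α}
    (h : ({a,b,c,d,e} : Finset α).card = 5) :
    a≠b ∧ a≠c ∧ a≠d ∧ a≠e ∧ b≠c ∧ b≠d ∧ b≠e ∧ c≠d ∧ c≠e ∧ d≠e := by
  have h4 : ({b,c,d,e} : Finset α).card ≤ 4 := by
    apply (card_insert_le _ _).trans; apply Nat.succ_le_succ
    apply (card_insert_le _ _).trans; apply Nat.succ_le_succ
    apply (card_insert_le _ _).trans; apply Nat.succ_le_succ; simp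
  have ha : a ∉ ({b,c,d,e} : Finset α) := fun hm => by
    rw [show ({a,b,c,d,e}:Finset α) = insert a {b,c,d,e} from rfl, card_insert_of_mem hm] at h
    omega
  have hb4 : ({b,c,d,e} : Finset α).card = 4 := by
    rw [show ({a,b,c,d,e}:Finset α) = insert a {b,c,d,e} from rfl,
      card_insert_of_notMem ha] at h
    omega
  have h3 : ({c,d,e} : Finset α).card ≤ 3 := by
    apply (card_insert_le _ _).trans; apply Nat.succ_le_succ
    apply (card_insert_le _ _).trans; apply Nat.succ_le_succ; simp
  have hbm : b ∉ ({c,d,e} : Finset α) := fun hm => by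
    rw [show ({b,c,d,e}:Finset α) = insert b {c,d,e} from rfl, card_insert_of_mem hm] at hb4
    omega
  have hc3 : ({c,d,e} : Finset α).card = 3 := by
    rw [show ({b,c,d,e}:Finset α) = insert b {c,d,e} from rfl, card_insert_of_notMem hbm] at hb4
    omega
  have h2 : ({d,e} : Finset α).card ≤ 2 := (card_insert_le _ _).trans (by simp)
  have hcm : c ∉ ({d,e} : Finset α) := fun hm => by
    rw [show ({c,d,e}:Finset α) = insert c {d,e} from rfl, card_insert_of_mem hm] at hc3
    omega
  have hd2 : ({d,e} : Finset α).card = 2 := by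
    rw [show ({c,d,e}:Finset α) = insert c {d,e} from rfl, card_insert_of_notMem hcm] at hc3
    omega
  have hde : d ≠ e := fun hde => by
    rw [hde] at hd2; simp at hd2
  simp only [mem_insert, mem_singleton, not_or] at ha hbm hcm
  exact ⟨ha.1, ha.2.1, ha.2.2.1, ha.2.2.2, hbm.1, hbm.2.1, hbm.2.2, hcm.1, hcm.2, hde⟩

lemma card_le_five {α : Type*} [DecidableEq α] (a b c d e : α) :
    ({a,b,c,d,e} : Finset α).card ≤ 5 := by
  apply (card_insert_le _ _).trans; apply Nat.succ_le_succ
  apply (card_insert_le _ _).trans; apply Nat.succ_le_succ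
  apply (card_insert_le _ _).trans; apply Nat.succ_le_succ
  apply (card_insert_le _ _).trans; apply Nat.succ_le_succ; simp

lemma glue (w : G → ℝ) (μ : ℝ) (T : Finset G) {n : ℕ} (hn : 3 < n)
    (P : G → Fin n) (R : Finset (Fin n)) (hR : R.card = 3)
    (f₀ : Fin n → Fin n) (hf₀ : ∀ j, f₀ j ∉ R)
    (hclass : ∀ k, k ∉ R → μ ≤ ∑ g ∈ T.filter (fun g => f₀ (P g) = k), w g) :
    μ ≤ mms (fun S => ∑ a ∈ S, w a) (n - 3) T := by
  have hcard : (univ \ R).card = n - 3 := by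
    rw [card_sdiff_of_subset (subset_univ R), hR, card_univ, Fintype.card_fin]
  let e := Finset.equivFinOfCardEq hcard
  have h3 : 0 < n - 3 := by omega
  apply le_mms _ _ h3 _ _
    (fun g => e ⟨f₀ (P g), mem_sdiff.2 ⟨mem_univ _, hf₀ (P g)⟩⟩)
  intro j
  have he : T.filter (fun g => e ⟨f₀ (P g), mem_sdiff.2 ⟨mem_univ _, hf₀ (P g)⟩⟩ = j)
      = T.filter (fun g => f₀ (P g) = ((e.symm j : {x // x ∈ univ \ R}) : Fin n)) := by
    apply filter_congr
    intro g _
    rw [Equiv.apply_eq_iff_eq_symm_apply]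
    constructor
    · intro h; exact congrArg Subtype.val h
    · intro h; exact Subtype.ext h
  rw [he]
  have hmem := (e.symm j).2
  rw [mem_sdiff] at hmem
  exact hclass _ hmem.2

lemma split_sum (w : G → ℝ) (S5 : Finset G) (p : G → Prop) [DecidablePred p] :
    ∑ g ∈ univ.filter p, w g
      = ∑ g ∈ (univ \ S5).filter p, w g + ∑ g ∈ S5.filter p, w g := by
  rw [← Finset.sum_filter_add_sum_filter_not (univ.filter p) (· ∈ S5) w, add_comm]
  have e1 : (univ.filter p).filter (fun g => ¬ g ∈ S5) = (univ \ S5).filter p := by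
    ext g; simp only [mem_filter, mem_sdiff, mem_univ, true_and]; tauto
  have e2 : (univ.filter p).filter (fun g => g ∈ S5) = S5.filter p := by
    ext g; simp only [mem_filter, mem_univ, true_and]; tauto
  rw [e1, e2]

lemma fiber_sum {n : ℕ} (w : G → ℝ) (P : G → Fin n) (A : Finset (Fin n)) (T : Finset G) :
    ∑ g ∈ T.filter (fun g => P g ∈ A), w g
      = ∑ j ∈ A, ∑ g ∈ T.filter (fun g => P g = j), w g := by
  rw [← Finset.sum_fiberwise_of_maps_to (s := T.filter (fun g => P g ∈ A)) (t := A)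
      (g := P) (fun g hg => (mem_filter.1 hg).2) w]
  refine Finset.sum_congr rfl (fun j hj => Finset.sum_congr ?_ (fun _ _ => rfl))
  ext g
  simp only [mem_filter]
  constructor
  · rintro ⟨⟨hT, _⟩, hj'⟩; exact ⟨hT, hj'⟩
  · rintro ⟨hT, hj'⟩; exact ⟨⟨hT, hj' ▸ hj⟩, hj'⟩

end Aux


/-- For an additive valuation (weights `w`), `n ≥ 4`, and five pairwise
distinct goods `h₁, h₂, s₁, s₂, s₃` with `w hⱼ ≤ (4/5)·μ^n(M)` and `w sⱼ ≤ (2/5)·μ^n(M)`,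
removing them and three agents does not decrease the maximin share:
`μ^{n−3}(M \ {h₁,h₂,s₁,s₂,s₃}) ≥ μ^n(M)`. -/
theorem stmt15 {G : Type*} [Fintype G] [DecidableEq G]
    (w : G → ℝ) (hw : ∀ g, 0 ≤ w g) (n : ℕ) (hn : 4 ≤ n)
    (h₁ h₂ s₁ s₂ s₃ : G)
    (hdist : ({h₁, h₂, s₁, s₂, s₃} : Finset G).card = 5)
    (hh : ∀ g ∈ ({h₁, h₂} : Finset G),
      w g ≤ (4 / 5) * mms (fun S => ∑ a ∈ S, w a) n Finset.univ)
    (hs : ∀ g ∈ ({s₁, s₂, s₃} : Finset G),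
      w g ≤ (2 / 5) * mms (fun S => ∑ a ∈ S, w a) n Finset.univ) :
    mms (fun S => ∑ a ∈ S, w a) n Finset.univ ≤
      mms (fun S => ∑ a ∈ S, w a) (n - 3)
        (Finset.univ \ {h₁, h₂, s₁, s₂, s₃}) := by
  obtain ⟨g12, g13, g14, g15, g23, g24, g25, g34, g35, g45⟩ := five_distinct hdist
  set S5 : Finset G := {h₁, h₂, s₁, s₂, s₃} with hS5def
  set μ : ℝ := mms (fun S => ∑ a ∈ S, w a) n Finset.univ with hμdef
  have hn0 : 0 < n := by omega
  have hμ0 : 0 ≤ μ := le_mms _ n hn0 univ 0 (fun _ => ⟨0, hn0⟩)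
    (fun j => Finset.sum_nonneg fun a _ => hw a)
  obtain ⟨P, hP0⟩ := exists_opt (fun S => ∑ a ∈ S, w a) n hn0 univ
  have hP : ∀ j, μ ≤ ∑ g ∈ univ.filter (fun g => P g = j), w g := fun j => hP0 j
  have hwh1 : w h₁ ≤ 4/5 * μ := hh h₁ (by simp)
  have hwh2 : w h₂ ≤ 4/5 * μ := hh h₂ (by simp)
  have hws1 : w s₁ ≤ 2/5 * μ := hs s₁ (by simp)
  have hws2 : w s₂ ≤ 2/5 * μ := hs s₂ (by simp)
  have hws3 : w s₃ ≤ 2/5 * μ := hs s₃ (by simp)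
  set D : Finset (Fin n) := {P h₁, P h₂, P s₁, P s₂, P s₃} with hDdef
  have hPD : ∀ g ∈ S5, P g ∈ D := by
    intro g hg
    rw [hS5def] at hg
    rw [hDdef]
    simp only [mem_insert, mem_singleton] at hg ⊢
    rcases hg with rfl | rfl | rfl | rfl | rfl <;> tauto
  have key : ∀ (k : Fin n) (A : Finset (Fin n)) (f₀ : Fin n → Fin n), (∀ j ∈ A, f₀ j = k) →
      ∑ j ∈ A, ∑ g ∈ (univ \ S5).filter (fun g => P g = j), w g
        ≤ ∑ g ∈ (univ \ S5).filter (fun g => f₀ (P g) = k), w g := by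
    intro k A f₀ hA
    rw [← fiber_sum]
    apply Finset.sum_le_sum_of_subset_of_nonneg
    · intro g hg
      simp only [mem_filter] at hg ⊢
      exact ⟨hg.1, by rw [hA _ hg.2]⟩
    · intro g _ _; exact hw g
  have hB' : ∀ (j : Fin n) (L : Finset G), S5.filter (fun g => P g = j) ⊆ L →
      μ - ∑ g ∈ L, w g ≤ ∑ g ∈ (univ \ S5).filter (fun g => P g = j), w g := by
    intro j L hL
    have h1 := split_sum w S5 (fun g => P g = j)
    have h2 : ∑ g ∈ S5.filter (fun g => P g = j), w g ≤ ∑ g ∈ L, w g :=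
      Finset.sum_le_sum_of_subset_of_nonneg hL (fun g _ _ => hw g)
    have h3 := hP j
    linarith
  have hunt : ∀ k : Fin n, k ∉ D → μ ≤ ∑ g ∈ (univ \ S5).filter (fun g => P g = k), w g := by
    intro k hk
    have hsub : S5.filter (fun g => P g = k) ⊆ (∅ : Finset G) := by
      intro g hg
      rw [mem_filter] at hg
      have := hPD g hg.1
      rw [hg.2] at this
      exact absurd this hk
    have := hB' k ∅ hsub
    simpa using this
  have hD5 := card_le_five (P h₁) (P h₂) (P s₁) (P s₂) (P s₃)
  rw [← hDdef] at hD5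
  rcases show D.card ≤ 3 ∨ D.card = 4 ∨ D.card = 5 by omega with hc | hc | hc
  · -- Case 1: at most 3 touched bundles
    obtain ⟨R, hDR, hR3⟩ := Finset.exists_superset_card_eq (n := 3) hc
      (by rw [Fintype.card_fin]; omega)
    have hRne : (univ \ R).Nonempty := by
      rw [← card_pos, card_sdiff_of_subset (subset_univ _), hR3, card_univ, Fintype.card_fin]; omega
    obtain ⟨k₀, hk₀⟩ := hRne
    have hk₀R : k₀ ∉ R := (mem_sdiff.1 hk₀).2
    refine glue w μ _ (by omega) P R hR3 (fun j => if j ∈ R then k₀ else j)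
      (fun j => ?_) (fun k hk => ?_)
    · split
      · exact hk₀R
      · assumption
    · refine le_trans ?_ (key k {k} (fun j => if j ∈ R then k₀ else j) (fun j hj => ?_))
      · rw [sum_singleton]
        exact hunt k (fun h => hk (hDR h))
      · rw [mem_singleton] at hj; subst hj
        exact if_neg hk
  · -- Case 2: exactly 4 touched bundles; merge all of them
    have haD : P h₁ ∈ D := by rw [hDdef]; exact mem_insert_self _ _
    set R : Finset (Fin n) := D.erase (P h₁) with hRdef
    have hR3 : R.card = 3 := by rw [hRdef, card_erase_of_mem haD, hc]
    have haR : P h₁ ∉ R := notMem_erase _ _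
    refine glue w μ _ (by omega) P R hR3 (fun j => if j ∈ R then P h₁ else j)
      (fun j => ?_) (fun k hk => ?_)
    · split
      · exact haR
      · assumption
    · by_cases hka : k = P h₁
      · subst hka
        refine le_trans ?_
          (key (P h₁) D (fun j => if j ∈ R then P h₁ else j) (fun j hj => ?_))
        · have hBj : ∀ j ∈ D, (fun j => ∑ g ∈ (univ \ S5).filter (fun g => P g = j), w g) j
              = (fun j => (∑ g ∈ univ.filter (fun g => P g = j), w g)
                - ∑ g ∈ S5.filter (fun g => P g = j), w g) j := by
            intro j _
            have := split_sum w S5 (fun g => P g = j)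
            dsimp only
            linarith
          rw [Finset.sum_congr rfl hBj, Finset.sum_sub_distrib]
          have hloss : ∑ j ∈ D, ∑ g ∈ S5.filter (fun g => P g = j), w g = ∑ g ∈ S5, w g := by
            rw [← fiber_sum w P D S5, Finset.filter_true_of_mem hPD]
          have h4 : (4 : ℝ) * μ ≤ ∑ j ∈ D, ∑ g ∈ univ.filter (fun g => P g = j), w g := by
            have h5 := Finset.card_nsmul_le_sum D
              (fun j => ∑ g ∈ univ.filter (fun g => P g = j), w g) μ (fun j _ => hP j)
            rw [hc] at h5
            have h4' : (4 : ℕ) • μ = 4 * μ := by simp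
            rw [h4'] at h5
            exact h5
          have m1 : h₁ ∉ ({h₂, s₁, s₂, s₃} : Finset G) := by
            simp only [mem_insert, mem_singleton]; push_neg; exact ⟨g12, g13, g14, g15⟩
          have m2 : h₂ ∉ ({s₁, s₂, s₃} : Finset G) := by
            simp only [mem_insert, mem_singleton]; push_neg; exact ⟨g23, g24, g25⟩
          have m3 : s₁ ∉ ({s₂, s₃} : Finset G) := by
            simp only [mem_insert, mem_singleton]; push_neg; exact ⟨g34, g35⟩
          have m4 : s₂ ∉ ({s₃} : Finset G) := by
            simp only [mem_singleton]; exact g45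
          have hS5sum : ∑ g ∈ S5, w g = w h₁ + w h₂ + w s₁ + w s₂ + w s₃ := by
            rw [hS5def, Finset.sum_insert m1, Finset.sum_insert m2, Finset.sum_insert m3,
              Finset.sum_insert m4, Finset.sum_singleton]
            ring
          rw [hloss, hS5sum]
          linarith
        · by_cases hjR : j ∈ R
          · exact if_pos hjR
          · have hj1 : j = P h₁ := by
              by_contra hne
              exact hjR (Finset.mem_erase.2 ⟨hne, hj⟩)
            subst hj1
            exact if_neg haR
      · have hkD : k ∉ D := fun hkD => hk (Finset.mem_erase.2 ⟨hka, hkD⟩)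
        refine le_trans ?_
          (key k {k} (fun j => if j ∈ R then P h₁ else j) (fun j hj => ?_))
        · rw [sum_singleton]; exact hunt k hkD
        · rw [mem_singleton] at hj; subst hj
          exact if_neg hk
  · -- Case 3: 5 distinct touched bundles
    obtain ⟨ab, ac1, ac2, ac3, bc1, bc2, bc3, c1c2, c1c3, c2c3⟩ :=
      five_distinct (show ({P h₁, P h₂, P s₁, P s₂, P s₃} : Finset (Fin n)).card = 5 by
        rw [← hDdef]; exact hc)
    set R : Finset (Fin n) := {P h₂, P s₁, P s₃} with hRdef
    have mb : P h₂ ∉ ({P s₁, P s₃} : Finset (Fin n)) := by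
      simp only [mem_insert, mem_singleton]; push_neg; exact ⟨bc1, bc3⟩
    have mc1 : P s₁ ∉ ({P s₃} : Finset (Fin n)) := by
      simp only [mem_singleton]; exact c1c3
    have hR3 : R.card = 3 := by
      rw [hRdef, card_insert_of_notMem mb, card_insert_of_notMem mc1, card_singleton]
    have haR : P h₁ ∉ R := by
      rw [hRdef]; simp only [mem_insert, mem_singleton]; push_neg; exact ⟨ab, ac1, ac3⟩
    have hc2R : P s₂ ∉ R := by
      rw [hRdef]; simp only [mem_insert, mem_singleton]; push_neg
      exact ⟨fun h => bc2 h.symm, fun h => c1c2 h.symm, c2c3⟩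
    have hmemR : ∀ j : Fin n, j ∈ R ↔ (j = P h₂ ∨ j = P s₁ ∨ j = P s₃) := by
      intro j; rw [hRdef]; simp [mem_insert, mem_singleton]
    set f₀ : Fin n → Fin n :=
      fun j => if j = P h₂ ∨ j = P s₁ then P h₁ else if j = P s₃ then P s₂ else j with hf₀def
    have sub_a : S5.filter (fun g => P g = P h₁) ⊆ {h₁} := by
      intro g hg
      simp only [hS5def, mem_filter, mem_insert, mem_singleton] at hg ⊢
      obtain ⟨hg1, hg2⟩ := hg
      rcases hg1 with rfl | rfl | rfl | rfl | rfl
      · rfl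
      · exact absurd hg2 (Ne.symm ab)
      · exact absurd hg2 (Ne.symm ac1)
      · exact absurd hg2 (Ne.symm ac2)
      · exact absurd hg2 (Ne.symm ac3)
    have sub_b : S5.filter (fun g => P g = P h₂) ⊆ {h₂} := by
      intro g hg
      simp only [hS5def, mem_filter, mem_insert, mem_singleton] at hg ⊢
      obtain ⟨hg1, hg2⟩ := hg
      rcases hg1 with rfl | rfl | rfl | rfl | rfl
      · exact absurd hg2 ab
      · rfl
      · exact absurd hg2 (Ne.symm bc1)
      · exact absurd hg2 (Ne.symm bc2)
      · exact absurd hg2 (Ne.symm bc3)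
    have sub_c1 : S5.filter (fun g => P g = P s₁) ⊆ {s₁} := by
      intro g hg
      simp only [hS5def, mem_filter, mem_insert, mem_singleton] at hg ⊢
      obtain ⟨hg1, hg2⟩ := hg
      rcases hg1 with rfl | rfl | rfl | rfl | rfl
      · exact absurd hg2 ac1
      · exact absurd hg2 bc1
      · rfl
      · exact absurd hg2 (Ne.symm c1c2)
      · exact absurd hg2 (Ne.symm c1c3)
    have sub_c2 : S5.filter (fun g => P g = P s₂) ⊆ {s₂} := by
      intro g hg
      simp only [hS5def, mem_filter, mem_insert, mem_singleton] at hg ⊢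
      obtain ⟨hg1, hg2⟩ := hg
      rcases hg1 with rfl | rfl | rfl | rfl | rfl
      · exact absurd hg2 ac2
      · exact absurd hg2 bc2
      · exact absurd hg2 c1c2
      · rfl
      · exact absurd hg2 (Ne.symm c2c3)
    have sub_c3 : S5.filter (fun g => P g = P s₃) ⊆ {s₃} := by
      intro g hg
      simp only [hS5def, mem_filter, mem_insert, mem_singleton] at hg ⊢
      obtain ⟨hg1, hg2⟩ := hg
      rcases hg1 with rfl | rfl | rfl | rfl | rfl
      · exact absurd hg2 ac3
      · exact absurd hg2 bc3
      · exact absurd hg2 c1c3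
      · exact absurd hg2 c2c3
      · rfl
    refine glue w μ _ (by omega) P R hR3 f₀ (fun j => ?_) (fun k hk => ?_)
    · rw [hf₀def]; dsimp only; split
      · exact haR
      · split
        · exact hc2R
        · rename_i hj1 hj2
          rw [hmemR]; push_neg at hj1 ⊢
          exact ⟨hj1.1, hj1.2, hj2⟩
    · rw [hmemR] at hk; push_neg at hk
      obtain ⟨hkb, hkc1, hkc3⟩ := hk
      by_cases hka : k = P h₁
      · subst hka
        refine le_trans ?_ (key (P h₁) {P h₁, P h₂, P s₁} f₀ (fun j hj => ?_))
        · have ma : P h₁ ∉ ({P h₂, P s₁} : Finset (Fin n)) := by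
            simp only [mem_insert, mem_singleton]; push_neg; exact ⟨ab, ac1⟩
          have mb' : P h₂ ∉ ({P s₁} : Finset (Fin n)) := by
            simp only [mem_singleton]; exact bc1
          rw [Finset.sum_insert ma, Finset.sum_insert mb', Finset.sum_singleton]
          have e1 := hB' (P h₁) {h₁} sub_a
          have e2 := hB' (P h₂) {h₂} sub_b
          have e3 := hB' (P s₁) {s₁} sub_c1
          rw [Finset.sum_singleton] at e1 e2 e3
          linarith
        · simp only [mem_insert, mem_singleton] at hj
          simp only [hf₀def]
          rcases hj with rfl | rfl | rfl
          · have hn1 : ¬ (P h₁ = P h₂ ∨ P h₁ = P s₁) := by push_neg; exact ⟨ab, ac1⟩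
            rw [if_neg hn1, if_neg ac3]
          · exact if_pos (Or.inl rfl : P h₂ = P h₂ ∨ P h₂ = P s₁)
          · exact if_pos (Or.inr rfl : P s₁ = P h₂ ∨ P s₁ = P s₁)
      · by_cases hkc2 : k = P s₂
        · subst hkc2
          refine le_trans ?_ (key (P s₂) {P s₂, P s₃} f₀ (fun j hj => ?_))
          · have mc2 : P s₂ ∉ ({P s₃} : Finset (Fin n)) := by
              simp only [mem_singleton]; exact c2c3
            rw [Finset.sum_insert mc2, Finset.sum_singleton]
            have e4 := hB' (P s₂) {s₂} sub_c2
            have e5 := hB' (P s₃) {s₃} sub_c3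
            rw [Finset.sum_singleton] at e4 e5
            linarith
          · simp only [mem_insert, mem_singleton] at hj
            simp only [hf₀def]
            rcases hj with rfl | rfl
            · have hn1 : ¬ (P s₂ = P h₂ ∨ P s₂ = P s₁) := by
                push_neg; exact ⟨fun h => bc2 h.symm, fun h => c1c2 h.symm⟩
              rw [if_neg hn1, if_neg c2c3]
            · have hn2 : ¬ (P s₃ = P h₂ ∨ P s₃ = P s₁) := by
                push_neg; exact ⟨fun h => bc3 h.symm, fun h => c1c3 h.symm⟩
              rw [if_neg hn2]
              exact if_pos rfl
        · have hkD : k ∉ D := by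
            rw [hDdef]
            simp only [mem_insert, mem_singleton]
            push_neg
            exact ⟨hka, hkb, hkc1, hkc2, hkc3⟩
          refine le_trans ?_ (key k {k} f₀ (fun j hj => ?_))
          · rw [sum_singleton]; exact hunt k hkD
          · rw [mem_singleton] at hj; subst hj
            simp only [hf₀def]
            have hn1 : ¬ (j = P h₂ ∨ j = P s₁) := by push_neg; exact ⟨hkb, hkc1⟩
            rw [if_neg hn1, if_neg hkc3]
end

section
/- Let M be a finite set of m chores and let there be n ≥ 2 agents, each with an additive cost function v_i : 2^M → ℝ≥0. Then there exist pairwise disjoint bundles A_1,…,A_n ⊆ M such that v_i(A_i) ≤ μ_i^n(M) for every agent i and |⋃_i A_i| ≥ m − n + 2; that is, a full MMS allocation of chores exists in which at most n − 2 chores are left unallocated. -/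
open Finset

/-- The maximin share for chores: the minimum over all partitions of `S` into `d` bundles of
the maximum cost of a bundle. -/
noncomputable def mmsChores {G : Type*} (v : Finset G → ℝ) (d : ℕ) (S : Finset G) : ℝ :=
  ⨅ P : G → Fin d, ⨆ j : Fin d, v (S.filter fun g => P g = j)

namespace Stmt18Aux

variable {G : Type*} [DecidableEq G]

/-- Union of a list of finsets. -/
def LU (l : List (Finset G)) : Finset G := l.foldr (· ∪ ·) ∅

@[simp] lemma LU_nil : LU ([] : List (Finset G)) = ∅ := rfl

@[simp] lemma LU_cons (P : Finset G) (l : List (Finset G)) : LU (P :: l) = P ∪ LU l := rfl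

lemma mem_LU {g : G} {l : List (Finset G)} : g ∈ LU l ↔ ∃ P ∈ l, g ∈ P := by
  induction l with
  | nil => simp
  | cons P l ih =>
      simp only [LU_cons, Finset.mem_union, ih, List.mem_cons]
      constructor
      · rintro (h | ⟨Q, hQ, hg⟩)
        · exact ⟨P, Or.inl rfl, h⟩
        · exact ⟨Q, Or.inr hQ, hg⟩
      · rintro ⟨Q, (rfl | hQ), hg⟩
        · exact Or.inl hg
        · exact Or.inr ⟨Q, hQ, hg⟩

lemma subset_LU {P : Finset G} {l : List (Finset G)} (h : P ∈ l) : P ⊆ LU l :=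
  fun g hg => mem_LU.2 ⟨P, h, hg⟩

lemma disjoint_LU {P : Finset G} {l : List (Finset G)} (h : ∀ Q ∈ l, Disjoint P Q) :
    Disjoint P (LU l) := by
  induction l with
  | nil => simp
  | cons Q l ih =>
      simp only [LU_cons, Finset.disjoint_union_right]
      exact ⟨h Q (by simp), ih fun Q' hQ' => h Q' (by simp [hQ'])⟩

lemma LU_perm : ∀ {l l' : List (Finset G)}, l.Perm l' → LU l = LU l' := by
  intro l l' h
  induction h with
  | nil => rfl
  | cons x _ ih => simp [ih]
  | swap x y l => simp [Finset.union_left_comm]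
  | trans _ _ ih1 ih2 => rw [ih1, ih2]

lemma LU_map_sdiff (l : List (Finset G)) (R : Finset G) :
    LU (l.map (· \ R)) = LU l \ R := by
  induction l with
  | nil => simp
  | cons P l ih => simp [ih, Finset.union_sdiff_distrib]

lemma sum_LU (f : G → ℝ) : ∀ (l : List (Finset G)), l.Pairwise Disjoint →
    ∑ g ∈ LU l, f g = (l.map fun P => ∑ g ∈ P, f g).sum := by
  intro l
  induction l with
  | nil => simp
  | cons P l ih =>
      intro h
      rw [List.pairwise_cons] at h
      rw [LU_cons, Finset.sum_union (disjoint_LU h.1), List.map_cons, List.sum_cons, ih h.2]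

lemma length_mul_lt_sum (b : ℝ) : ∀ (l : List ℝ), l ≠ [] → (∀ x ∈ l, b < x) →
    (l.length : ℝ) * b < l.sum := by
  intro l
  induction l with
  | nil => simp
  | cons x t ih =>
      intro _ h
      rcases t with _ | ⟨y, t⟩
      · simpa using h x (by simp)
      · have h1 := ih (by simp) (fun z hz => h z (List.mem_cons_of_mem _ hz))
        have h2 := h x List.mem_cons_self
        have : ((x :: y :: t).length : ℝ) = ((y :: t).length : ℝ) + 1 := by
          push_cast [List.length_cons]; ring
        rw [List.sum_cons, this]
        nlinarith [h1, h2]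

/-- The core combinatorial lemma: a "divider" `d` has a partition of the item set into a list
`parts` of disjoint bundles each of divider-cost at most `μ d`; every other agent `j ∈ J`
has total cost at most `parts.length • μ j`.  If `parts.length ≤ |J| + 1` then there is an
allocation (one bundle per agent, each agent's own cost within `μ`) covering all but at most
`parts.length − 2` items. -/
lemma core {ι : Type*} [DecidableEq ι] (v : ι → G → ℝ) (μ : ι → ℝ)
    (hv : ∀ i g, 0 ≤ v i g) (hμ : ∀ i, 0 ≤ μ i) (d : ι) :
    ∀ (N : ℕ) (parts : List (Finset G)) (J : Finset ι),
      parts.length = N → d ∉ J → parts.Pairwise Disjoint →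
      (∀ P ∈ parts, ∑ g ∈ P, v d g ≤ μ d) →
      parts.length ≤ J.card + 1 →
      (∀ j ∈ J, ∑ g ∈ LU parts, v j g ≤ (parts.length : ℝ) * μ j) →
      ∃ A : ι → Finset G,
        (∀ i, A i ⊆ LU parts) ∧
        (∀ i, ∑ g ∈ A i, v i g ≤ μ i) ∧
        (∀ i j, i ≠ j → Disjoint (A i) (A j)) ∧
        (LU parts).card ≤ ((insert d J).biUnion A).card + (parts.length - 2) := by
  intro N
  induction N with
  | zero =>
      intro parts J hlen _ _ _ _ _
      have hnil : parts = [] := List.length_eq_zero_iff.1 hlen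
      subst hnil
      refine ⟨fun _ => ∅, by simp, by simpa using hμ, by simp, by simp⟩
  | succ k ih =>
      intro parts J hlen hdJ hpw hpd hcard hmass
      rcases k with _ | k1
      · -- length 1 : divider takes everything
        obtain ⟨P, rfl⟩ := List.length_eq_one_iff.1 hlen
        refine ⟨fun i => if i = d then P else ∅, ?_, ?_, ?_, ?_⟩
        · intro i
          by_cases hi : i = d <;> simp [hi]
        · intro i
          by_cases hi : i = d
          · simpa [hi] using hpd P (by simp)
          · simpa [hi] using hμ i
        · intro i j hij
          by_cases hi : i = d
          · have : j ≠ d := fun h => hij (hi.trans h.symm)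
            simp [hi, this]
          · simp [hi]
        · have hsub : (LU [P]) ⊆ (insert d J).biUnion fun i => if i = d then P else ∅ := by
            intro g hg
            refine Finset.mem_biUnion.2 ⟨d, Finset.mem_insert_self _ _, ?_⟩
            simpa using hg
          have := Finset.card_le_card hsub
          omega
      rcases k1 with _ | k2
      · -- length 2 : cut-and-choose between the divider and one agent of J
        obtain ⟨P, Q, rfl⟩ := List.length_eq_two.1 hlen
        have hPQ : Disjoint P Q := by
          have := (List.pairwise_cons.1 hpw).1 Q (by simp)
          exact this
        have hJne : J.Nonempty := Finset.card_pos.1 (by omega)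
        obtain ⟨j₁, hj₁⟩ := hJne
        have hdj₁ : j₁ ≠ d := fun h => hdJ (h ▸ hj₁)
        have hm := hmass j₁ hj₁
        have hsplit : ∑ g ∈ LU [P, Q], v j₁ g = ∑ g ∈ P, v j₁ g + ∑ g ∈ Q, v j₁ g := by
          rw [sum_LU _ _ hpw]; simp
        rw [hsplit] at hm
        have hlen2 : (([P, Q] : List (Finset G)).length : ℝ) = 2 := by norm_num
        rw [hlen2] at hm
        by_cases hcase : ∑ g ∈ P, v j₁ g ≤ μ j₁
        · refine ⟨fun i => if i = d then Q else if i = j₁ then P else ∅, ?_, ?_, ?_, ?_⟩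
          · intro i
            by_cases hi : i = d
            · simp [hi, Finset.subset_union_right]
            · by_cases hi' : i = j₁
              · simp [hi, hi', hdj₁, Finset.subset_union_left]
              · simp [hi, hi']
          · intro i
            by_cases hi : i = d
            · simpa [hi] using hpd Q (by simp)
            · by_cases hi' : i = j₁
              · simpa [hi, hi', hdj₁] using hcase
              · simpa [hi, hi'] using hμ i
          · intro i j hij
            by_cases hi : i = d <;> by_cases hj : j = d
            · exact absurd (hi.trans hj.symm) hij
            · by_cases hj' : j = j₁
              · simpa [hi, hj, hj', hdj₁] using hPQ.symm
              · simp [hi, hj, hj']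
            · by_cases hi' : i = j₁
              · simpa [hi, hj, hi', hdj₁] using hPQ
              · simp [hi, hj, hi']
            · by_cases hi' : i = j₁ <;> by_cases hj' : j = j₁
              · exact absurd (hi'.trans hj'.symm) hij
              · simp [hi, hj, hi', hj', hdj₁]
              · simp [hi, hj, hi', hj', hdj₁]
              · simp [hi, hj, hi', hj']
          · have hsub : (LU [P, Q]) ⊆ (insert d J).biUnion
                fun i => if i = d then Q else if i = j₁ then P else ∅ := by
              intro g hg
              simp only [LU_cons, LU_nil, Finset.union_empty, Finset.mem_union] at hg
              rcases hg with hg | hg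
              · refine Finset.mem_biUnion.2 ⟨j₁, Finset.mem_insert_of_mem hj₁, ?_⟩
                simp [hdj₁, hg]
              · refine Finset.mem_biUnion.2 ⟨d, Finset.mem_insert_self _ _, ?_⟩
                simp [hg]
            have := Finset.card_le_card hsub
            omega
        · push_neg at hcase
          have hQle : ∑ g ∈ Q, v j₁ g ≤ μ j₁ := by linarith
          refine ⟨fun i => if i = d then P else if i = j₁ then Q else ∅, ?_, ?_, ?_, ?_⟩
          · intro i
            by_cases hi : i = d
            · simp [hi, Finset.subset_union_left]
            · by_cases hi' : i = j₁
              · simp [hi, hi', hdj₁, Finset.subset_union_right]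
              · simp [hi, hi']
          · intro i
            by_cases hi : i = d
            · simpa [hi] using hpd P (by simp)
            · by_cases hi' : i = j₁
              · simpa [hi, hi', hdj₁] using hQle
              · simpa [hi, hi'] using hμ i
          · intro i j hij
            by_cases hi : i = d <;> by_cases hj : j = d
            · exact absurd (hi.trans hj.symm) hij
            · by_cases hj' : j = j₁
              · simpa [hi, hj, hj', hdj₁] using hPQ
              · simp [hi, hj, hj']
            · by_cases hi' : i = j₁
              · simpa [hi, hj, hi', hdj₁] using hPQ.symm
              · simp [hi, hj, hi']
            · by_cases hi' : i = j₁ <;> by_cases hj' : j = j₁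
              · exact absurd (hi'.trans hj'.symm) hij
              · simp [hi, hj, hi', hj', hdj₁]
              · simp [hi, hj, hi', hj', hdj₁]
              · simp [hi, hj, hi', hj']
          · have hsub : (LU [P, Q]) ⊆ (insert d J).biUnion
                fun i => if i = d then P else if i = j₁ then Q else ∅ := by
              intro g hg
              simp only [LU_cons, LU_nil, Finset.union_empty, Finset.mem_union] at hg
              rcases hg with hg | hg
              · refine Finset.mem_biUnion.2 ⟨d, Finset.mem_insert_self _ _, ?_⟩
                simp [hg]
              · refine Finset.mem_biUnion.2 ⟨j₁, Finset.mem_insert_of_mem hj₁, ?_⟩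
                simp [hdj₁, hg]
            have := Finset.card_le_card hsub
            omega
      · -- length k2 + 3 ≥ 3 : the inductive step
        classical
        set S := LU parts with hS
        have hJne : J.Nonempty := Finset.card_pos.1 (by omega)
        obtain ⟨j₀, hj₀⟩ := hJne
        -- some part T is acceptable to j₀
        have hTex : ∃ T ∈ parts, ∑ g ∈ T, v j₀ g ≤ μ j₀ := by
          by_contra hcon
          push_neg at hcon
          have hpne : parts ≠ [] := by intro h; rw [h] at hlen; simp at hlen
          have hne : parts.map (fun P => ∑ g ∈ P, v j₀ g) ≠ [] := by
            simpa using hpne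
          have hlt := length_mul_lt_sum (μ j₀) _ hne ?hall
          case hall =>
            rintro x hx
            rw [List.mem_map] at hx
            obtain ⟨P, hP, rfl⟩ := hx
            exact hcon P hP
          rw [← sum_LU _ parts hpw] at hlt
          have hm := hmass j₀ hj₀
          rw [List.length_map] at hlt
          linarith
        obtain ⟨T, hTmem, hTj₀⟩ := hTex
        have hTS : T ⊆ S := subset_LU hTmem
        -- choose a maximal feasible extension (w, X) of T
        set C := (J ×ˢ S.powerset).filter
          (fun q => (∑ g ∈ T, v q.1 g ≤ μ q.1) ∧ T ⊆ q.2 ∧ (∑ g ∈ q.2, v q.1 g ≤ μ q.1))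
          with hC
        have hCne : (j₀, T) ∈ C := by
          simp only [hC, Finset.mem_filter, Finset.mem_product, Finset.mem_powerset]
          exact ⟨⟨hj₀, hTS⟩, hTj₀, Finset.Subset.refl _, hTj₀⟩
        obtain ⟨⟨w, X⟩, hwXC, hmax⟩ := Finset.exists_max_image C (fun q => q.2.card) ⟨_, hCne⟩
        simp only [hC, Finset.mem_filter, Finset.mem_product, Finset.mem_powerset] at hwXC
        obtain ⟨⟨hwJ, hXS⟩, hwT, hTX, hwX⟩ := hwXC
        have hwd : w ≠ d := fun h => hdJ (h ▸ hwJ)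
        by_cases hfull : S ⊆ X
        · -- the winner can take everything
          refine ⟨fun i => if i = w then X else ∅, ?_, ?_, ?_, ?_⟩
          · intro i
            by_cases hi : i = w <;> simp [hi, hXS]
          · intro i
            by_cases hi : i = w
            · simpa [hi] using hwX
            · simpa [hi] using hμ i
          · intro i j hij
            by_cases hi : i = w
            · have : j ≠ w := fun h => hij (hi.trans h.symm)
              simp [hi, this]
            · simp [hi]
          · have hsub : S ⊆ (insert d J).biUnion fun i => if i = w then X else ∅ := by
              intro g hg
              refine Finset.mem_biUnion.2 ⟨w, Finset.mem_insert_of_mem hwJ, ?_⟩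
              simpa using hfull hg
            have := Finset.card_le_card hsub
            omega
        · -- there is a leftover item c; discard it
          obtain ⟨c, hcS, hcX⟩ := Finset.not_subset.1 hfull
          set R := insert c X with hR
          have hXR : X ⊆ R := Finset.subset_insert _ _
          have hTR : T ⊆ R := hTX.trans hXR
          have hRS : R ⊆ S := Finset.insert_subset hcS hXS
          have hRcard : R.card = X.card + 1 := Finset.card_insert_of_notMem hcX
          -- every other member of J pays more than μ on R
          have hkey : ∀ j ∈ J, j ≠ w → μ j < ∑ g ∈ R, v j g := by
            intro j hj hjw
            by_cases hpool : ∑ g ∈ T, v j g ≤ μ j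
            · by_contra hle
              push_neg at hle
              have hmem : (j, R) ∈ C := by
                simp only [hC, Finset.mem_filter, Finset.mem_product, Finset.mem_powerset]
                exact ⟨⟨hj, hRS⟩, hpool, hTR, hle⟩
              have := hmax _ hmem
              simp only at this
              omega
            · push_neg at hpool
              calc μ j < ∑ g ∈ T, v j g := hpool
                _ ≤ ∑ g ∈ R, v j g :=
                    Finset.sum_le_sum_of_subset_of_nonneg hTR (fun g _ _ => hv j g)
          -- recursion data
          set rest := parts.erase T with hrest
          have hpermT : parts.Perm (T :: rest) := List.perm_cons_erase hTmem
          have hrestlen : rest.length = k2 + 2 := by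
            rw [hrest, List.length_erase_of_mem hTmem, hlen]
            omega
          set parts' := rest.map (· \ R) with hparts'
          have hlen' : parts'.length = k2 + 2 := by
            rw [hparts', List.length_map, hrestlen]
          have hpw_cons : (T :: rest).Pairwise Disjoint :=
            (List.Perm.pairwise_iff (fun h => h.symm) hpermT).1 hpw
          have hrestpw : rest.Pairwise Disjoint := (List.pairwise_cons.1 hpw_cons).2
          have hpw' : parts'.Pairwise Disjoint := by
            refine List.Pairwise.map _ ?_ hrestpw
            intro a b hab
            exact hab.mono Finset.sdiff_subset Finset.sdiff_subset
          have hSsplit : S = T ∪ LU rest := by rw [hS, LU_perm hpermT, LU_cons]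
          have hLU' : LU parts' = S \ R := by
            rw [hparts', LU_map_sdiff, hSsplit, Finset.union_sdiff_distrib,
              Finset.sdiff_eq_empty_iff_subset.2 hTR, Finset.empty_union]
          have hpd' : ∀ P ∈ parts', ∑ g ∈ P, v d g ≤ μ d := by
            intro P hP
            rw [hparts', List.mem_map] at hP
            obtain ⟨Q, hQ, rfl⟩ := hP
            have hQparts : Q ∈ parts := List.mem_of_mem_erase (hrest ▸ hQ)
            exact le_trans
              (Finset.sum_le_sum_of_subset_of_nonneg Finset.sdiff_subset (fun g _ _ => hv d g))
              (hpd Q hQparts)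
          set J' := J.erase w with hJ'
          have hdJ' : d ∉ J' := fun h => hdJ (Finset.mem_of_mem_erase h)
          have hwJcard : 1 ≤ J.card := Finset.card_pos.2 ⟨w, hwJ⟩
          have hJ'card : J'.card = J.card - 1 := Finset.card_erase_of_mem hwJ
          have hcard' : parts'.length ≤ J'.card + 1 := by omega
          have hmass' : ∀ j ∈ J', ∑ g ∈ LU parts', v j g ≤ (parts'.length : ℝ) * μ j := by
            intro j hj
            have hjJ : j ∈ J := Finset.mem_of_mem_erase hj
            have hjw : j ≠ w := Finset.ne_of_mem_erase hj
            rw [hLU', Finset.sum_sdiff_eq_sub hRS]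
            have h1 := hmass j hjJ
            have h2 := hkey j hjJ hjw
            rw [hlen] at h1
            rw [hlen']
            push_cast at h1 ⊢
            linarith
          obtain ⟨A', hA'sub, hA'sum, hA'disj, hA'cov⟩ :=
            ih parts' J' hlen' hdJ' hpw' hpd' hcard' hmass'
          have hA'sub' : ∀ i, A' i ⊆ S \ R := fun i => (hA'sub i).trans (hLU' ▸ Finset.Subset.refl _)
          have hdisjX : ∀ i0, Disjoint X (A' i0) := by
            intro i0
            refine Finset.disjoint_left.2 fun g hgX hgA => ?_
            exact (Finset.mem_sdiff.1 (hA'sub' i0 hgA)).2 (hXR hgX)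
          refine ⟨fun i => if i = w then X else A' i, ?_, ?_, ?_, ?_⟩
          · intro i
            by_cases hi : i = w
            · simpa [hi] using hXS
            · simp only [hi, if_false]
              exact (hA'sub' i).trans (Finset.sdiff_subset)
          · intro i
            by_cases hi : i = w
            · simpa [hi] using hwX
            · simpa [hi] using hA'sum i
          · intro i j hij
            by_cases hi : i = w <;> by_cases hj : j = w
            · exact absurd (hi.trans hj.symm) hij
            · simpa [hi, hj] using hdisjX j
            · simpa [hi, hj] using (hdisjX i).symm
            · simpa [hi, hj] using hA'disj i j hij
          · -- coverage accounting
            set BigA := fun i => if i = w then X else A' i with hBigA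
            set U' := (insert d J').biUnion A' with hU'
            have hU'sub : U' ⊆ S \ R := by
              rw [hU']
              exact Finset.biUnion_subset.2 fun i _ => hA'sub' i
            have hXU'disj : Disjoint X U' :=
              Finset.disjoint_left.2 fun g hgX hgU =>
                (Finset.mem_sdiff.1 (hU'sub hgU)).2 (hXR hgX)
            have hsubBig : X ∪ U' ⊆ (insert d J).biUnion BigA := by
              apply Finset.union_subset
              · intro g hg
                refine Finset.mem_biUnion.2 ⟨w, Finset.mem_insert_of_mem hwJ, ?_⟩
                simpa [hBigA] using hg
              · intro g hg
                obtain ⟨i, hi, hgi⟩ := Finset.mem_biUnion.1 (hU' ▸ hg)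
                have hiw : i ≠ w := by
                  rcases Finset.mem_insert.1 hi with rfl | hi'
                  · exact fun h => hwd h.symm
                  · exact Finset.ne_of_mem_erase hi'
                have himem : i ∈ insert d J := by
                  rcases Finset.mem_insert.1 hi with rfl | hi'
                  · exact Finset.mem_insert_self _ _
                  · exact Finset.mem_insert_of_mem (Finset.mem_of_mem_erase hi')
                refine Finset.mem_biUnion.2 ⟨i, himem, ?_⟩
                simpa [hBigA, hiw] using hgi
            have hcardXU : (X ∪ U').card = X.card + U'.card :=
              Finset.card_union_of_disjoint hXU'disj
            have h5 : X.card + U'.card ≤ ((insert d J).biUnion BigA).card := by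
              rw [← hcardXU]; exact Finset.card_le_card hsubBig
            have h1 : (S \ R).card + R.card = S.card := Finset.card_sdiff_add_card_eq_card hRS
            have h2 : (S \ R).card ≤ U'.card + (parts'.length - 2) := by
              rw [← hLU']; exact hA'cov
            omega

/-- Attainment of the maximin share value and its basic properties. -/
lemma mms_attained {G : Type*} [Fintype G] [DecidableEq G] (n : ℕ) (hn : 0 < n)
    (f : G → ℝ) (hf : ∀ g, 0 ≤ f g) :
    ∃ P : G → Fin n,
      (∀ t : Fin n, ∑ g ∈ Finset.univ.filter (fun g => P g = t), f g ≤
        mmsChores (fun S => ∑ g ∈ S, f g) n Finset.univ) ∧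
      0 ≤ mmsChores (fun S => ∑ g ∈ S, f g) n Finset.univ := by
  haveI : Nonempty (Fin n) := ⟨⟨0, hn⟩⟩
  classical
  set F : (G → Fin n) → ℝ :=
    fun P => ⨆ t : Fin n, ∑ g ∈ Finset.univ.filter (fun g => P g = t), f g with hF
  obtain ⟨P₀, _, hmin⟩ :=
    Finset.exists_min_image (Finset.univ : Finset (G → Fin n)) F ⟨Classical.arbitrary _, Finset.mem_univ _⟩
  have hmin' : ∀ P, F P₀ ≤ F P := fun P => hmin P (Finset.mem_univ _)
  have hinf : mmsChores (fun S => ∑ g ∈ S, f g) n Finset.univ = F P₀ := by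
    unfold mmsChores
    apply le_antisymm
    · exact ciInf_le ⟨F P₀, by rintro y ⟨P, rfl⟩; exact hmin' P⟩ P₀
    · exact le_ciInf hmin'
  have hba : BddAbove (Set.range fun t : Fin n =>
      ∑ g ∈ Finset.univ.filter (fun g => P₀ g = t), f g) := (Set.finite_range _).bddAbove
  refine ⟨P₀, fun t => ?_, ?_⟩
  · rw [hinf]; exact le_ciSup hba t
  · rw [hinf]
    exact le_trans (Finset.sum_nonneg fun g _ => hf g) (le_ciSup hba ⟨0, hn⟩)

end Stmt18Aux

/-- For every chores instance with `n ≥ 2` agents and additive cost functions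
(weights `w i`), there exist pairwise disjoint bundles `A₁,…,Aₙ` with `v_i(A_i) ≤ μ_i^n(M)`
for every agent `i`, and at least `m − n + 2` chores allocated (at most `n − 2` left out). -/
theorem stmt18 {G : Type*} [Fintype G] [DecidableEq G] (n : ℕ) (hn : 2 ≤ n)
    (w : Fin n → G → ℝ) (hw : ∀ i g, 0 ≤ w i g) :
    ∃ A : Fin n → Finset G,
      (∀ i j, i ≠ j → Disjoint (A i) (A j)) ∧
      (∀ i, ∑ g ∈ A i, w i g ≤ mmsChores (fun S => ∑ g ∈ S, w i g) n Finset.univ) ∧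
      Fintype.card G + 2 ≤ (Finset.univ.biUnion A).card + n := by
  classical
  open Stmt18Aux in
  have hn0 : 0 < n := by omega
  haveI : NeZero n := ⟨by omega⟩
  set μ : Fin n → ℝ := fun i => mmsChores (fun S => ∑ g ∈ S, w i g) n Finset.univ with hμdef
  have hatt := fun i => Stmt18Aux.mms_attained n hn0 (w i) (hw i)
  have hμ0 : ∀ i, 0 ≤ μ i := fun i => (hatt i).choose_spec.2
  obtain ⟨P₀, hP₀, -⟩ := hatt 0
  set parts : List (Finset G) :=
    (List.finRange n).map (fun t => Finset.univ.filter fun g => P₀ g = t) with hparts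
  have hlen : parts.length = n := by simp [hparts]
  have hpw : parts.Pairwise Disjoint := by
    rw [hparts]
    refine List.Pairwise.map _ ?_ (List.nodup_finRange n)
    intro a b hab
    refine Finset.disjoint_left.2 fun g hg1 hg2 => hab ?_
    have h1 := (Finset.mem_filter.1 hg1).2
    have h2 := (Finset.mem_filter.1 hg2).2
    rw [← h1, ← h2]
  have hLUparts : Stmt18Aux.LU parts = Finset.univ := by
    apply Finset.eq_univ_of_forall
    intro g
    refine Stmt18Aux.mem_LU.2 ⟨Finset.univ.filter fun x => P₀ x = P₀ g, ?_, ?_⟩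
    · rw [hparts, List.mem_map]
      exact ⟨P₀ g, List.mem_finRange _, rfl⟩
    · simp
  have hpd : ∀ P ∈ parts, ∑ g ∈ P, w 0 g ≤ μ 0 := by
    intro P hP
    rw [hparts, List.mem_map] at hP
    obtain ⟨t, -, rfl⟩ := hP
    exact hP₀ t
  set J : Finset (Fin n) := Finset.univ.erase 0 with hJ
  have hdJ : (0 : Fin n) ∉ J := Finset.notMem_erase _ _
  have hJcard : J.card = n - 1 := by
    rw [hJ, Finset.card_erase_of_mem (Finset.mem_univ _), Finset.card_univ, Fintype.card_fin]
  have hcard : parts.length ≤ J.card + 1 := by omega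
  have hmass : ∀ j ∈ J, ∑ g ∈ Stmt18Aux.LU parts, w j g ≤ (parts.length : ℝ) * μ j := by
    intro j _
    rw [hLUparts, hlen]
    obtain ⟨Pj, hPj, -⟩ := hatt j
    calc ∑ g ∈ Finset.univ, w j g
        = ∑ t : Fin n, ∑ g ∈ Finset.univ.filter (fun g => Pj g = t), w j g :=
          (Finset.sum_fiberwise _ _ _).symm
      _ ≤ ∑ _t : Fin n, μ j := Finset.sum_le_sum fun t _ => hPj t
      _ = n * μ j := by rw [Finset.sum_const, Finset.card_univ, Fintype.card_fin, nsmul_eq_mul]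
  obtain ⟨A, hAsub, hAsum, hAdisj, hAcov⟩ :=
    Stmt18Aux.core w μ hw hμ0 0 n parts J hlen hdJ hpw hpd hcard hmass
  refine ⟨A, hAdisj, hAsum, ?_⟩
  have hins : insert (0 : Fin n) J = Finset.univ := by
    rw [hJ]; exact Finset.insert_erase (Finset.mem_univ _)
  rw [hins, hLUparts, Finset.card_univ, hlen] at hAcov
  omega
end
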